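/- Define h : B → ℝ² on the open unit ball B = {z ∈ ℝ² : |z| < 1} by h(z) = z/(1 + √(1 − |z|²)); equivalently, h(z) = ((1 − √(1 − |z|²))/|z|²) z for z ≠ 0 and h(0) = 0. Then h is smooth on B and div h(z) = (1 − |z|²)^{−1/2} for every z ∈ B. -/

import Mathlib

noncomputable section

abbrev Euc2 := EuclideanSpace ℝ (Fin 2)

/-- Divergence of a vector field on `ℝ²`. -/
def vdiv (v : Euc2 → Euc2) (x : Euc2) : ℝ :=
  ∑ i, fderiv ℝ (fun y => v y i) x (EuclideanSpace.single i 1)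

/-- The vector field `h(z) = z / (1 + √(1−|z|²))` on the open unit ball of `ℝ²`. -/
def hfield (z : Euc2) : Euc2 := (1 + Real.sqrt (1 - ‖z‖ ^ 2))⁻¹ • z

lemma aux_pos {z : Euc2} (hz : ‖z‖ < 1) : 0 < 1 - ‖z‖ ^ 2 := by
  nlinarith [norm_nonneg z]

lemma sqrt_deriv {z : Euc2} (hz : ‖z‖ < 1) :
    HasFDerivAt (fun y : Euc2 => Real.sqrt (1 - ‖y‖ ^ 2))
      ((1 / (2 * Real.sqrt (1 - ‖z‖ ^ 2))) • ((0 : Euc2 →L[ℝ] ℝ) - 2 • innerSL ℝ z)) z := by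
  have h1 : HasFDerivAt (fun y : Euc2 => 1 - ‖y‖ ^ 2)
      ((0 : Euc2 →L[ℝ] ℝ) - 2 • innerSL ℝ z) z :=
    (hasFDerivAt_const 1 z).sub (hasStrictFDerivAt_norm_sq z).hasFDerivAt
  exact (Real.hasDerivAt_sqrt (aux_pos hz).ne').comp_hasFDerivAt z h1

/-- The field `h(z) = z/(1+√(1−|z|²))` is smooth on the open unit ball
`B ⊆ ℝ²` and satisfies `div h(z) = (1−|z|²)^{−1/2}` for every `z ∈ B`. -/
theorem stmt_12 :
    ContDiffOn ℝ (⊤ : ℕ∞) hfield {z : Euc2 | ‖z‖ < 1} ∧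
    ∀ z : Euc2, ‖z‖ < 1 → vdiv hfield z = (Real.sqrt (1 - ‖z‖ ^ 2))⁻¹ := by
  constructor
  · intro z hz
    simp only [Set.mem_setOf_eq] at hz
    have hpos := aux_pos hz
    have hs0 : (0:ℝ) ≤ Real.sqrt (1 - ‖z‖ ^ 2) := Real.sqrt_nonneg _
    have hc : ContDiffAt ℝ (⊤ : ℕ∞) (fun y : Euc2 => (1 + Real.sqrt (1 - ‖y‖ ^ 2))⁻¹) z := by
      refine ContDiffAt.inv ?_ (by positivity)
      exact contDiffAt_const.add ((Real.contDiffAt_sqrt hpos.ne').comp z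
        (contDiffAt_const.sub (contDiff_norm_sq ℝ).contDiffAt))
    exact (hc.smul contDiffAt_id).contDiffWithinAt
  · intro z hz
    have hpos := aux_pos hz
    set s := Real.sqrt (1 - ‖z‖ ^ 2) with hs_def
    have hs_pos : 0 < s := Real.sqrt_pos.mpr hpos
    have hs_sq : s ^ 2 = 1 - ‖z‖ ^ 2 := Real.sq_sqrt hpos.le
    have hden : (1 : ℝ) + s ≠ 0 := by positivity
    -- derivative of the scalar coefficient
    have hf : HasFDerivAt (fun y : Euc2 => (1 + Real.sqrt (1 - ‖y‖ ^ 2))⁻¹)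
        (-((1 + s) ^ 2)⁻¹ • ((0 : Euc2 →L[ℝ] ℝ) + (1 / (2 * s)) • ((0 : Euc2 →L[ℝ] ℝ) - 2 • innerSL ℝ z))) z := by
      have h1 : HasFDerivAt (fun y : Euc2 => 1 + Real.sqrt (1 - ‖y‖ ^ 2))
          ((0 : Euc2 →L[ℝ] ℝ) + (1 / (2 * s)) • ((0 : Euc2 →L[ℝ] ℝ) - 2 • innerSL ℝ z)) z :=
        (hasFDerivAt_const 1 z).add (sqrt_deriv hz)
      simpa [Function.comp_def] using (hasDerivAt_inv hden).comp_hasFDerivAt z h1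
    have key : ∀ i : Fin 2, fderiv ℝ (fun y => hfield y i) z (EuclideanSpace.single i 1)
        = (1 + s)⁻¹ + z i * (((1 + s) ^ 2)⁻¹ * (z i / s)) := by
      intro i
      have hcomp : HasFDerivAt (fun y : Euc2 => hfield y i)
          ((1 + s)⁻¹ • (EuclideanSpace.proj i : Euc2 →L[ℝ] ℝ) +
            (z i) • (-((1 + s) ^ 2)⁻¹ • ((0 : Euc2 →L[ℝ] ℝ) + (1 / (2 * s)) • ((0 : Euc2 →L[ℝ] ℝ) - 2 • innerSL ℝ z)))) z := by
        have := hf.mul ((EuclideanSpace.proj (𝕜 := ℝ) i).hasFDerivAt (x := z))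
        simpa [hfield, PiLp.smul_apply, smul_eq_mul, Pi.mul_def, ← hs_def] using this
      rw [hcomp.fderiv]
      simp [EuclideanSpace.inner_single_right]
      left; left
      fin_cases i <;> simp <;> ring
    rw [vdiv]
    have hzz : z 0 * z 0 + z 1 * z 1 = 1 - s ^ 2 := by
      have h2 := real_inner_self_eq_norm_sq z
      rw [PiLp.inner_apply] at h2
      simp [RCLike.inner_apply, Fin.sum_univ_two] at h2
      linear_combination h2 + hs_sq
    rw [Fin.sum_univ_two, key 0, key 1]
    clear key hf
    set a := z 0 with ha
    set b := z 1 with hb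
    clear_value s a b
    field_simp
    linear_combination hzz
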